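/- arXiv:0909.0057 — 3 statements merged into one kernel-verified Lean document; each statement's English description precedes it below -/
import Mathlib

section
/- Let σ be a rational polyhedral cone in N_ℝ where N is a lattice of rank n, and let σ^∨ ⊆ M_ℝ be its dual cone, where M = N^∨. Then the monoid σ^∨ ∩ M is finitely generated (Gordan's lemma). -/
theorem gordan_pwoNat {ι : Type*} [Finite ι] (s : Set (ι → ℕ)) : s.IsPWO :=
  Set.isPWO_of_wellQuasiOrderedLE s

/-- Key abstract lemma: a subtraction-closed submonoid of `ℕ^ι` is generated by its
(finitely many, by Dickson's lemma) minimal nonzero elements. -/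
theorem gordan_aux {ι : Type*} [Finite ι] (E : Set (ι → ℕ))
    (hsub : ∀ x ∈ E, ∀ y ∈ E, x ≤ y → y - x ∈ E) :
    ∃ T : Finset (ι → ℕ), ↑T ⊆ E ∧ ∀ x ∈ E, x ∈ AddSubmonoid.closure (T : Set (ι → ℕ)) := by
  classical
  cases nonempty_fintype ι
  set Mn : Set (ι → ℕ) := {x | x ∈ E ∧ x ≠ 0 ∧ ∀ y ∈ E, y ≠ 0 → y ≤ x → y = x} with hMn
  have hanti : IsAntichain (· ≤ ·) Mn := by
    intro a ha b hb hne hab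
    exact hne (hb.2.2 a ha.1 ha.2.1 hab)
  have hfin : Mn.Finite :=
    hanti.finite_of_partiallyWellOrderedOn (gordan_pwoNat Mn)
  refine ⟨hfin.toFinset, ?_, ?_⟩
  · intro x hx
    exact (hfin.mem_toFinset.1 hx).1
  · intro x hx
    generalize hN : (∑ i, x i) = N
    induction N using Nat.strong_induction_on generalizing x with
    | _ N ih =>
      by_cases hx0 : x = 0
      · exact hx0 ▸ zero_mem _
      · set A : Set (ι → ℕ) := {y | (y ∈ E ∧ y ≠ 0) ∧ y ≤ x} with hA
        have hAne : A.Nonempty := ⟨x, ⟨⟨hx, hx0⟩, le_refl x⟩⟩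
        have hwf : A.IsWF := (gordan_pwoNat A).isWF
        set m := hwf.min hAne with hm
        have hmA : m ∈ A := hwf.min_mem hAne
        have hmMn : m ∈ Mn := by
          refine ⟨hmA.1.1, hmA.1.2, ?_⟩
          intro y hy hy0 hym
          have hyA : y ∈ A := ⟨⟨hy, hy0⟩, hym.trans hmA.2⟩
          have hnlt := hwf.not_lt_min hAne hyA
          by_contra hne
          exact hnlt (lt_of_le_of_ne hym hne)
        have hle : m ≤ x := hmA.2
        have hx' : x - m ∈ E := hsub m hmA.1.1 x hx hle
        obtain ⟨j, hj⟩ : ∃ j, 0 < m j := by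
          by_contra h
          push_neg at h
          exact hmA.1.2 (funext fun i => Nat.le_zero.1 (h i))
        have hsum' : (∑ i, (x - m) i) < N := by
          rw [← hN]
          refine Finset.sum_lt_sum (fun i _ => Nat.sub_le _ _) ⟨j, Finset.mem_univ j, ?_⟩
          exact Nat.sub_lt (lt_of_lt_of_le hj (hle j)) hj
        have hrec : x - m ∈ AddSubmonoid.closure (hfin.toFinset : Set (ι → ℕ)) :=
          ih _ hsum' _ hx' rfl
        have hxeq : x = m + (x - m) := (add_tsub_cancel_of_le hle).symm
        rw [hxeq]
        exact add_mem (AddSubmonoid.subset_closure (by simpa using hmMn)) hrec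


/-- Gordan's lemma: if `σ ⊆ N_ℝ = ℝⁿ` is a rational polyhedral cone
(the set of nonnegative combinations of a finite set `s` of lattice points), then the
monoid `σ^∨ ∩ M` of lattice points of the dual cone is a finitely generated monoid,
i.e. it is the closure of a finite set. -/
theorem gordan (n : ℕ) (s : Finset (Fin n → ℤ)) (σ : Set (Fin n → ℝ))
    (hσ : σ = {x | ∃ c : (Fin n → ℤ) → ℝ, (∀ g, 0 ≤ c g) ∧
      x = ∑ g ∈ s, c g • (fun i => (g i : ℝ))}) :
    ∃ S : Finset (Fin n → ℤ), ∀ m : Fin n → ℤ,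
      (∀ v ∈ σ, 0 ≤ ∑ i, (m i : ℝ) * v i) ↔
        m ∈ AddSubmonoid.closure (S : Set (Fin n → ℤ)) := by
  classical
  let ι := (Fin n ⊕ Fin n) ⊕ {g : (Fin n → ℤ) // g ∈ s}
  let F : (ι → ℕ) →+ (Fin n → ℤ) :=
    AddMonoidHom.mk' (fun x i => (x (Sum.inl (Sum.inl i)) : ℤ) - (x (Sum.inl (Sum.inr i)) : ℤ))
      (by intro a b; funext i; simp only [Pi.add_apply, Nat.cast_add]; ring)
  have hF : ∀ (x : ι → ℕ) (i : Fin n),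
      F x i = (x (Sum.inl (Sum.inl i)) : ℤ) - (x (Sum.inl (Sum.inr i)) : ℤ) := fun _ _ => rfl
  obtain ⟨T, hTE, hTgen⟩ := gordan_aux
    {x : ι → ℕ | ∀ g : {g : (Fin n → ℤ) // g ∈ s}, (x (Sum.inr g) : ℤ) = ∑ i, F x i * g.1 i}
    (by
      intro x hxE y hyE hxy g
      have h1 : ∀ j : ι, (((y - x) j : ℕ) : ℤ) = (y j : ℤ) - (x j : ℤ) := by
        intro j
        have h := hxy j
        simp only [Pi.sub_apply]
        exact Nat.cast_sub (hxy j)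
      have hFyx : ∀ i, F (y - x) i = F y i - F x i := by
        intro i
        rw [hF, h1, h1, hF, hF]
        ring
      show (((y - x) (Sum.inr g) : ℕ) : ℤ) = _
      rw [h1]
      simp_rw [hFyx, sub_mul, Finset.sum_sub_distrib]
      rw [← hxE g, ← hyE g])
  refine ⟨T.image (fun x => F x), fun m => ⟨?_, ?_⟩⟩
  · intro hm
    have hmg : ∀ g ∈ s, 0 ≤ ∑ i, m i * g i := by
      intro g hg
      have hv : (fun i => (g i : ℝ)) ∈ σ := by
        rw [hσ]
        refine ⟨fun g' => if g' = g then 1 else 0, fun g' => by dsimp only; split <;> norm_num, ?_⟩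
        have : ∑ g' ∈ s, (if g' = g then (1:ℝ) else 0) • (fun i => ((g' i : ℝ)))
            = fun i => (g i : ℝ) := by
          simp only [ite_smul, one_smul, zero_smul, Finset.sum_ite_eq', hg, if_true]
        exact this.symm
      have h2 := hm _ hv
      have h3 : (0:ℝ) ≤ ((∑ i, m i * g i : ℤ) : ℝ) := by push_cast; exact h2
      exact_mod_cast h3
    let x : ι → ℕ := fun j =>
      Sum.rec (fun j' => Sum.rec (fun i => (m i).toNat) (fun i => (-(m i)).toNat) j')
        (fun g => (∑ i, m i * g.1 i).toNat) j
    have hFx : F x = m := by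
      funext i
      show (((m i).toNat : ℤ)) - (((-(m i)).toNat : ℤ)) = m i
      omega
    have hxE : x ∈ {x : ι → ℕ |
        ∀ g : {g : (Fin n → ℤ) // g ∈ s}, (x (Sum.inr g) : ℤ) = ∑ i, F x i * g.1 i} := by
      intro g
      show ((∑ i, m i * g.1 i).toNat : ℤ) = _
      rw [hFx]
      exact Int.toNat_of_nonneg (hmg g.1 g.2)
    have hmem : F x ∈ (AddSubmonoid.closure (T : Set (ι → ℕ))).map F :=
      ⟨x, hTgen x hxE, rfl⟩
    rw [AddMonoidHom.map_mclosure, hFx] at hmem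
    rwa [Finset.coe_image]
  · intro hm v hv
    let P : AddSubmonoid (Fin n → ℤ) :=
      { carrier := {m' | ∀ g ∈ s, 0 ≤ ∑ i, m' i * g i}
        zero_mem' := by intro g _; simp
        add_mem' := by
          intro a b ha hb g hg
          simp only [Pi.add_apply, add_mul, Finset.sum_add_distrib]
          exact add_nonneg (ha g hg) (hb g hg) }
    have hSP : ((T.image (fun x => F x) : Finset (Fin n → ℤ)) : Set (Fin n → ℤ)) ⊆ P := by
      intro m' hm'
      simp only [Finset.coe_image, Set.mem_image, Finset.mem_coe] at hm'
      obtain ⟨x, hxT, rfl⟩ := hm'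
      intro g hg
      have hxE := hTE (Finset.mem_coe.2 hxT)
      have h4 := hxE ⟨g, hg⟩
      rw [← h4]
      exact Int.natCast_nonneg _
    have hmP : m ∈ P := AddSubmonoid.closure_le.2 hSP hm
    rw [hσ] at hv
    obtain ⟨c, hc, rfl⟩ := hv
    have hswap : ∑ i, (m i : ℝ) * (∑ g ∈ s, c g • (fun i => ((g i : ℝ)))) i
        = ∑ g ∈ s, c g * ∑ i, (m i : ℝ) * (g i : ℝ) := by
      simp only [Finset.sum_apply, Pi.smul_apply, smul_eq_mul, Finset.mul_sum]
      rw [Finset.sum_comm]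
      exact Finset.sum_congr rfl fun g _ => Finset.sum_congr rfl fun i _ => by ring
    rw [hswap]
    refine Finset.sum_nonneg fun g hg => mul_nonneg (hc g) ?_
    have h5 := hmP g hg
    have h6 : (0:ℝ) ≤ ((∑ i, m i * g i : ℤ) : ℝ) := by exact_mod_cast h5
    push_cast at h6
    exact h6
end

section
/- Let Σ be a rational fan in N_ℝ and σ ∈ Σ a cone. Choose for each cone τ a point v_τ ∈ N in the relative interior of τ. If σ₀ < σ₁ < ⋯ < σ_p is a strictly increasing chain of cones in Σ (each a proper face of the next), then the images π_{σ₀}(v_{σ₁}), …, π_{σ₀}(v_{σ_p}) under the quotient map π_{σ₀} : N_ℝ → N_ℝ/span(σ₀) are linearly independent; equivalently they span a p-dimensional simplicial cone in N(σ₀)_ℝ. -/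
/-- A face of a convex cone/set: a convex subset such that whenever a point of an open
segment between two points of `σ` lies in `τ`, both endpoints lie in `τ`. -/
def IsFaceOf {E : Type*} [AddCommGroup E] [Module ℝ E] (τ σ : Set E) : Prop :=
  τ ⊆ σ ∧ Convex ℝ τ ∧
    ∀ x ∈ σ, ∀ y ∈ σ, ∀ t : ℝ, 0 < t → t < 1 →
      t • x + (1 - t) • y ∈ τ → x ∈ τ ∧ y ∈ τ

/-- A rational polyhedral cone in `ℝⁿ`: nonnegative combinations of finitely many
lattice points. -/
def IsRatCone {n : ℕ} (σ : Set (Fin n → ℝ)) : Prop :=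
  ∃ s : Finset (Fin n → ℤ), σ = {x | ∃ c : (Fin n → ℤ) → ℝ, (∀ g, 0 ≤ c g) ∧
    x = ∑ g ∈ s, c g • (fun i => (g i : ℝ))}

lemma IsRatCone.zero_mem {n : ℕ} {σ : Set (Fin n → ℝ)} (h : IsRatCone σ) : (0 : Fin n → ℝ) ∈ σ := by
  obtain ⟨s, rfl⟩ := h
  exact ⟨fun _ => 0, fun g => le_refl 0, by simp⟩

lemma IsRatCone.smul_mem {n : ℕ} {σ : Set (Fin n → ℝ)} (h : IsRatCone σ) {t : ℝ} (ht : 0 ≤ t)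
    {x : Fin n → ℝ} (hx : x ∈ σ) : t • x ∈ σ := by
  obtain ⟨s, rfl⟩ := h
  obtain ⟨c, hc, rfl⟩ := hx
  exact ⟨fun g => t * c g, fun g => mul_nonneg ht (hc g),
    by rw [Finset.smul_sum]; simp [mul_smul]⟩

lemma IsRatCone.add_mem {n : ℕ} {σ : Set (Fin n → ℝ)} (h : IsRatCone σ)
    {x y : Fin n → ℝ} (hx : x ∈ σ) (hy : y ∈ σ) : x + y ∈ σ := by
  obtain ⟨s, rfl⟩ := h
  obtain ⟨c, hc, rfl⟩ := hx
  obtain ⟨d, hd, rfl⟩ := hy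
  exact ⟨fun g => c g + d g, fun g => add_nonneg (hc g) (hd g),
    by simp [add_smul, Finset.sum_add_distrib]⟩

/-- Every element of the span of a rational cone is a difference of two elements. -/
lemma IsRatCone.span_sub {n : ℕ} {σ : Set (Fin n → ℝ)} (h : IsRatCone σ)
    {x : Fin n → ℝ} (hx : x ∈ Submodule.span ℝ σ) : ∃ a ∈ σ, ∃ b ∈ σ, x = a - b := by
  induction hx using Submodule.span_induction with
  | mem x hxσ => exact ⟨x, hxσ, 0, h.zero_mem, by simp⟩
  | zero => exact ⟨0, h.zero_mem, 0, h.zero_mem, by simp⟩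
  | add x y hx hy ihx ihy =>
      obtain ⟨a, ha, b, hb, rfl⟩ := ihx
      obtain ⟨a', ha', b', hb', rfl⟩ := ihy
      exact ⟨a + a', h.add_mem ha ha', b + b', h.add_mem hb hb', by abel⟩
  | smul t x hx ihx =>
      obtain ⟨a, ha, b, hb, rfl⟩ := ihx
      rcases le_or_gt 0 t with ht | ht
      · exact ⟨t • a, h.smul_mem ht ha, t • b, h.smul_mem ht hb, by rw [smul_sub]⟩
      · refine ⟨(-t) • b, h.smul_mem (by linarith) hb, (-t) • a, h.smul_mem (by linarith) ha, ?_⟩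
        rw [smul_sub]; module

/-- A point of a cone lying in the span of a face lies in the face. -/
lemma mem_face_of_mem_span {n : ℕ} {τ σ' : Set (Fin n → ℝ)} (hτ : IsRatCone τ)
    (hσ : IsRatCone σ') (hface : IsFaceOf τ σ') {x : Fin n → ℝ} (hx : x ∈ σ')
    (hxs : x ∈ Submodule.span ℝ τ) : x ∈ τ := by
  obtain ⟨a, ha, b, hb, hab⟩ := hτ.span_sub hxs
  have h2b : (2 : ℝ) • b ∈ σ' := hσ.smul_mem (by norm_num) (hface.1 hb)
  have hmid : (1/2 : ℝ) • x + (1 - 1/2 : ℝ) • ((2:ℝ) • b) ∈ τ := by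
    have heq : (1/2 : ℝ) • x + (1 - 1/2 : ℝ) • ((2:ℝ) • b)
        = (1/2 : ℝ) • a + (1/2 : ℝ) • b := by rw [hab]; module
    rw [heq]
    exact hface.2.1 ha hb (by norm_num) (by norm_num) (by norm_num)
  exact (hface.2.2 x hx ((2:ℝ) • b) h2b (1/2) (by norm_num) (by norm_num) hmid).1

/-- An intrinsic-interior point can be pushed slightly past any point of the set. -/
lemma exists_pos_push {n : ℕ} {s : Set (Fin n → ℝ)} {vv y : Fin n → ℝ}
    (hvv : vv ∈ intrinsicInterior ℝ s) (hy : y ∈ s) :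
    ∃ ε : ℝ, 0 < ε ∧ vv + ε • (vv - y) ∈ s := by
  obtain ⟨v', hv', hveq⟩ := mem_intrinsicInterior.mp hvv
  have hyA : y ∈ affineSpan ℝ s := subset_affineSpan ℝ s hy
  have hvA : vv ∈ affineSpan ℝ s := hveq ▸ v'.2
  have hmem : ∀ t : ℝ, vv + t • (vv - y) ∈ affineSpan ℝ s := by
    intro t
    have := AffineSubspace.smul_vsub_vadd_mem (affineSpan ℝ s) t hvA hyA hvA
    simpa [vsub_eq_sub, vadd_eq_add, add_comm] using this
  set f : ℝ → affineSpan ℝ s := fun t => ⟨vv + t • (vv - y), hmem t⟩ with hfdef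
  have hfc : Continuous f := by
    apply Continuous.subtype_mk
    fun_prop
  have hf0 : f 0 = v' := by
    apply Subtype.ext
    simp [hfdef, hveq]
  have hnhds : f ⁻¹' interior ((↑) ⁻¹' s : Set (affineSpan ℝ s)) ∈ nhds (0 : ℝ) :=
    hfc.continuousAt.preimage_mem_nhds (isOpen_interior.mem_nhds (hf0 ▸ hv'))
  obtain ⟨ε, hε, hball⟩ := Metric.mem_nhds_iff.mp hnhds
  refine ⟨ε / 2, by positivity, ?_⟩
  have hb : (ε / 2 : ℝ) ∈ Metric.ball (0 : ℝ) ε := by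
    simp only [Metric.mem_ball, Real.dist_eq, sub_zero]
    rw [abs_of_pos (by positivity)]
    linarith
  have := interior_subset (hball hb)
  exact this

/-- If a face contains an intrinsic interior point of the set, it is the whole set. -/
lemma subset_face_of_intrinsicInterior_mem {n : ℕ} {τ σ' : Set (Fin n → ℝ)}
    (hface : IsFaceOf τ σ') {vv : Fin n → ℝ} (hvv : vv ∈ intrinsicInterior ℝ σ')
    (hvτ : vv ∈ τ) : σ' ⊆ τ := by
  intro y hy
  obtain ⟨ε, hε, hz⟩ := exists_pos_push hvv hy
  set z : Fin n → ℝ := vv + ε • (vv - y) with hzdef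
  have h1ε : (0:ℝ) < 1 + ε := by linarith
  set t : ℝ := ε / (1 + ε) with htdef
  have ht0 : 0 < t := div_pos hε h1ε
  have ht1 : t < 1 := (div_lt_one h1ε).mpr (by linarith)
  have hcombo : t • y + (1 - t) • z = vv := by
    rw [hzdef, htdef]
    have : (1 : ℝ) - ε / (1 + ε) = 1 / (1 + ε) := by field_simp; ring
    rw [this]
    funext j
    simp only [Pi.add_apply, Pi.smul_apply, Pi.sub_apply, smul_eq_mul]
    field_simp
    ring
  exact (hface.2.2 y hy z hz t ht0 ht1 (hcombo ▸ hvτ)).1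

/-- for a strictly increasing chain `σ₀ < σ₁ < ⋯ < σ_p` of cones of a
rational fan, with `v_{σ_i} ∈ N` an interior point of `σ_i`, the images of
`v_{σ₁}, …, v_{σ_p}` under the quotient map `π_{σ₀} : ℝⁿ → ℝⁿ/span(σ₀)` are linearly
independent. -/
theorem chain_interiorPoints_linearIndependent (n p : ℕ)
    (σ : Fin (p + 1) → Set (Fin n → ℝ))
    (hpoly : ∀ i, IsRatCone (σ i))
    (hchain : ∀ i : Fin p, IsFaceOf (σ i.castSucc) (σ i.succ) ∧ σ i.castSucc ≠ σ i.succ)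
    (v : Fin (p + 1) → Fin n → ℤ)
    (hv : ∀ i, (fun j => (v i j : ℝ)) ∈ intrinsicInterior ℝ (σ i)) :
    LinearIndependent ℝ
      (fun i : Fin p => (Submodule.span ℝ (σ 0)).mkQ (fun j => (v i.succ j : ℝ))) := by
  set w : Fin (p + 1) → (Fin n → ℝ) := fun i => (fun j => (v i j : ℝ)) with hwdef
  -- monotonicity of the chain of cones
  have hmono' : ∀ d : ℕ, ∀ a b : Fin (p + 1), a.val + d = b.val → σ a ⊆ σ b := by
    intro d
    induction d with
    | zero =>
        intro a b hab
        have : a = b := Fin.ext (by omega)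
        rw [this]
    | succ d ih =>
        intro a b hab
        have hlt : a.val + d < p := by omega
        set b' : Fin p := ⟨a.val + d, hlt⟩ with hb'
        have hbc : b = b'.succ := Fin.ext (by simp [hb', Fin.val_succ]; omega)
        have h1 : σ a ⊆ σ b'.castSucc := ih a b'.castSucc (by simp [hb'])
        have h2 : σ b'.castSucc ⊆ σ b'.succ := (hchain b').1.1
        rw [hbc]
        exact fun x hx => h2 (h1 hx)
  have hmono : ∀ a b : Fin (p + 1), a ≤ b → σ a ⊆ σ b := by
    intro a b hab
    exact hmono' (b.val - a.val) a b (by omega)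
  have hW : ∀ a b : Fin (p + 1), a ≤ b →
      Submodule.span ℝ (σ a) ≤ Submodule.span ℝ (σ b) :=
    fun a b hab => Submodule.span_mono (hmono a b hab)
  -- key: v_{k+1} is not in the span of σ_k
  have hkey : ∀ k : Fin p, w k.succ ∉ Submodule.span ℝ (σ k.castSucc) := by
    intro k hmem
    have hvσ : w k.succ ∈ σ k.succ := intrinsicInterior_subset (hv k.succ)
    have h1 : w k.succ ∈ σ k.castSucc :=
      mem_face_of_mem_span (hpoly _) (hpoly _) (hchain k).1 hvσ hmem
    have h2 : σ k.succ ⊆ σ k.castSucc :=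
      subset_face_of_intrinsicInterior_mem (hchain k).1 (hv k.succ) h1
    exact (hchain k).2 (Set.Subset.antisymm (hchain k).1.1 h2)
  rw [linearIndependent_iff']
  intro s g hsum
  by_cases hTe : s.filter (fun i => g i ≠ 0) = ∅
  · intro i hi
    by_contra h
    have : i ∈ s.filter (fun i => g i ≠ 0) := Finset.mem_filter.mpr ⟨hi, h⟩
    simp [hTe] at this
  · exfalso
    set T := s.filter (fun i => g i ≠ 0) with hT
    have hTne : T.Nonempty := Finset.nonempty_iff_ne_empty.mpr hTe
    set k : Fin p := T.max' hTne with hk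
    have hkT : k ∈ T := T.max'_mem hTne
    have hks : k ∈ s := (Finset.mem_filter.mp hkT).1
    have hgk : g k ≠ 0 := (Finset.mem_filter.mp hkT).2
    have hmax : ∀ i ∈ T, i ≤ k := fun i hi => T.le_max' i hi
    -- the full sum lies in span (σ 0)
    have h0 : (Submodule.span ℝ (σ 0)).mkQ (∑ i ∈ s, g i • w i.succ) = 0 := by
      rw [map_sum]
      simpa only [map_smul] using hsum
    have hsum0 : (∑ i ∈ s, g i • w i.succ) ∈ Submodule.span ℝ (σ 0) :=
      (Submodule.Quotient.mk_eq_zero _).mp h0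
    have hsumk : (∑ i ∈ s, g i • w i.succ) ∈ Submodule.span ℝ (σ k.castSucc) :=
      hW 0 k.castSucc (Fin.zero_le _) hsum0
    -- the sum over s.erase k lies in span (σ k.castSucc)
    have hrest : (∑ i ∈ s.erase k, g i • w i.succ) ∈ Submodule.span ℝ (σ k.castSucc) := by
      apply Submodule.sum_mem
      intro i hi
      by_cases hgi : g i = 0
      · simp [hgi]
      · have hiT : i ∈ T := Finset.mem_filter.mpr ⟨Finset.mem_of_mem_erase hi, hgi⟩
        have hik : i < k := lt_of_le_of_ne (hmax i hiT) (Finset.ne_of_mem_erase hi)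
        have hle : i.succ ≤ k.castSucc := by
          simp only [Fin.le_def, Fin.val_succ, Fin.coe_castSucc]
          exact hik
        have hwmem : w i.succ ∈ Submodule.span ℝ (σ i.succ) :=
          Submodule.subset_span (intrinsicInterior_subset (hv i.succ))
        exact Submodule.smul_mem _ _ (hW i.succ k.castSucc hle hwmem)
    have hsplit : (∑ i ∈ s, g i • w i.succ)
        = g k • w k.succ + ∑ i ∈ s.erase k, g i • w i.succ :=
      (Finset.add_sum_erase s (fun i => g i • w i.succ) hks).symm
    have hgkw : g k • w k.succ ∈ Submodule.span ℝ (σ k.castSucc) := by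
      have := Submodule.sub_mem _ hsumk hrest
      rw [hsplit] at this
      simpa using this
    exact hkey k ((Submodule.smul_mem_iff _ hgk).mp hgkw)
end

section
/- Let σ₀ < σ₁ < ⋯ < σ_p be a strictly ascending chain of cones in a rational fan Σ, with interior points v_{σ_i} ∈ N chosen in the relative interior of each σ_i. Define φ : [0,1]^p → Hom(σ_p^∨ ∩ M, ℝ₊) by φ(t)(m) = (∏_{i=1}^p t_i^{⟨m, v_{σ_i}⟩}) · x_{σ₀}(m), with the convention 0⁰ = 1. Then φ is well-defined (all exponents ⟨m, v_{σ_i}⟩ are nonnegative for m ∈ σ_p^∨) and continuous, φ(t) = x_{σ_p} whenever t_p = 0, and φ(t) ≠ φ(t') whenever t_p ≠ t'_p. -/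
open Set Finset Pointwise

namespace PhiChainAux

variable {n : ℕ}


/-- The pairing `x ↦ ∑ j, c j * x j` as a linear map. -/
def dotL (c : Fin n → ℝ) : (Fin n → ℝ) →ₗ[ℝ] ℝ where
  toFun x := ∑ j, c j * x j
  map_add' x y := by simp [mul_add, Finset.sum_add_distrib]
  map_smul' r x := by
    simp [Finset.mul_sum, mul_comm, mul_assoc, mul_left_comm]

lemma dotL_apply (c x : Fin n → ℝ) : dotL c x = ∑ j, c j * x j := rfl

lemma dot_comm (c x : Fin n → ℝ) : (∑ j, c j * x j) = ∑ j, x j * c j := by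
  exact Finset.sum_congr rfl fun j _ => mul_comm _ _

/-- A point of the intrinsic interior can be pushed a bit beyond any point of the set. -/
lemma rel_ext {σ : Set (Fin n → ℝ)} {v w : Fin n → ℝ}
    (hv : v ∈ intrinsicInterior ℝ σ) (hw : w ∈ σ) :
    ∃ ε : ℝ, 0 < ε ∧ v + ε • (v - w) ∈ σ := by
  rw [mem_intrinsicInterior] at hv
  obtain ⟨y, hy, hyv⟩ := hv
  have hvs : v ∈ affineSpan ℝ σ := by rw [← hyv]; exact y.2
  have hws : w ∈ affineSpan ℝ σ := subset_affineSpan ℝ σ hw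
  have hmem : ∀ ε : ℝ, v + ε • (v - w) ∈ affineSpan ℝ σ := by
    intro ε
    have := (affineSpan ℝ σ).smul_vsub_vadd_mem ε hvs hws hvs
    simpa [vsub_eq_sub, vadd_eq_add, add_comm] using this
  set c : ℝ → (affineSpan ℝ σ : Set (Fin n → ℝ)) := fun ε => ⟨v + ε • (v - w), hmem ε⟩ with hc
  have hcont : Continuous c := by
    apply Continuous.subtype_mk
    exact continuous_const.add (continuous_id.smul continuous_const)
  have hc0 : c 0 = y := by
    apply Subtype.ext
    simp [hc, ← hyv]
  have hnhds : c ⁻¹' (interior (((↑) : (affineSpan ℝ σ : Set (Fin n → ℝ)) → (Fin n → ℝ)) ⁻¹' σ)) ∈ nhds (0 : ℝ) := by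
    apply hcont.continuousAt.preimage_mem_nhds
    apply isOpen_interior.mem_nhds
    rw [hc0]; exact hy
  obtain ⟨δ, hδpos, hδ⟩ := Metric.mem_nhds_iff.mp hnhds
  refine ⟨δ / 2, by linarith, ?_⟩
  have : (δ / 2 : ℝ) ∈ Metric.ball (0 : ℝ) δ := by
    rw [Metric.mem_ball, Real.dist_eq, sub_zero, abs_of_nonneg (by linarith : (0:ℝ) ≤ δ / 2)]
    linarith
  have := interior_subset (hδ this)
  exact this

/-- A nonnegative linear functional vanishing at a relative interior point vanishes on the set. -/
lemma pos_of_relint {σ : Set (Fin n → ℝ)} (f : (Fin n → ℝ) →ₗ[ℝ] ℝ)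
    (hf : ∀ w ∈ σ, 0 ≤ f w) {v : Fin n → ℝ} (hv : v ∈ intrinsicInterior ℝ σ)
    (hv0 : f v = 0) : ∀ w ∈ σ, f w = 0 := by
  intro w hw
  obtain ⟨ε, hε, hmem⟩ := rel_ext hv hw
  have h1 := hf _ hmem
  rw [map_add, map_smul, map_sub, hv0] at h1
  have h2 := hf w hw
  simp only [smul_eq_mul] at h1
  nlinarith


noncomputable def zc (g : Fin n → ℤ) : Fin n → ℝ := fun j => (g j : ℝ)

/-- Structure record of cone closure properties. -/
lemma ratCone_ops {σ : Set (Fin n → ℝ)} (h : IsRatCone σ) :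
    (0 : Fin n → ℝ) ∈ σ ∧ (∀ x ∈ σ, ∀ y ∈ σ, x + y ∈ σ) ∧
      (∀ c : ℝ, 0 ≤ c → ∀ x ∈ σ, c • x ∈ σ) := by
  obtain ⟨s, rfl⟩ := h
  refine ⟨⟨fun _ => 0, fun g => le_refl 0, by simp⟩, ?_, ?_⟩
  · rintro x ⟨c, hc, rfl⟩ y ⟨d, hd, rfl⟩
    exact ⟨fun g => c g + d g, fun g => add_nonneg (hc g) (hd g), by
      simp [add_smul, Finset.sum_add_distrib]⟩
  · rintro a ha x ⟨c, hc, rfl⟩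
    exact ⟨fun g => a * c g, fun g => mul_nonneg ha (hc g), by
      simp [Finset.smul_sum, smul_smul]⟩

/-- finite nonnegative combinations of elements stay in the cone. -/
lemma cone_sum {σ : Set (Fin n → ℝ)}
    (h0 : (0 : Fin n → ℝ) ∈ σ) (hadd : ∀ x ∈ σ, ∀ y ∈ σ, x + y ∈ σ)
    (hsmul : ∀ c : ℝ, 0 ≤ c → ∀ x ∈ σ, c • x ∈ σ)
    {α : Type*} (s : Finset α) (c : α → ℝ) (g : α → Fin n → ℝ)
    (hc : ∀ a ∈ s, 0 ≤ c a) (hg : ∀ a ∈ s, g a ∈ σ) :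
    (∑ a ∈ s, c a • g a) ∈ σ := by
  classical
  induction s using Finset.induction with
  | empty => simpa using h0
  | @insert a s ha ih =>
    rw [Finset.sum_insert ha]
    exact hadd _ (hsmul _ (hc a (mem_insert_self a s)) _ (hg a (mem_insert_self a s))) _
      (ih (fun b hb => hc b (mem_insert_of_mem hb)) (fun b hb => hg b (mem_insert_of_mem hb)))

section Face
variable {σ F : Set (Fin n → ℝ)}
  (hface : IsFaceOf F σ)
  (h0 : (0 : Fin n → ℝ) ∈ σ) (hadd : ∀ x ∈ σ, ∀ y ∈ σ, x + y ∈ σ)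
  (hsmul : ∀ c : ℝ, 0 ≤ c → ∀ x ∈ σ, c • x ∈ σ)

include hface h0 hadd hsmul

lemma face_zero (hne : F.Nonempty) : (0 : Fin n → ℝ) ∈ F := by
  obtain ⟨z, hz⟩ := hne
  have hz2 : (2 : ℝ) • z ∈ σ := hsmul 2 (by norm_num) z (hface.1 hz)
  have := hface.2.2 _ hz2 _ h0 (1/2) (by norm_num) (by norm_num) (by
    convert hz using 1
    rw [smul_smul]
    norm_num)
  exact this.2

lemma face_smul (hne : F.Nonempty) {c : ℝ} (hc : 0 ≤ c) {x : Fin n → ℝ} (hx : x ∈ F) :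
    c • x ∈ F := by
  have hxσ : x ∈ σ := hface.1 hx
  rcases eq_or_lt_of_le hc with h | hcpos
  · rw [← h, zero_smul]; exact face_zero hface h0 hadd hsmul hne
  rcases lt_trichotomy c 1 with h1 | h1 | h1
  · -- 0 < c < 1 : x = (1/(2-c)) • (c•x) + (1 - 1/(2-c)) • (2•x)
    have h2c : (0:ℝ) < 2 - c := by linarith
    have hcx : c • x ∈ σ := hsmul c hc x hxσ
    have h2x : (2:ℝ) • x ∈ σ := hsmul 2 (by norm_num) x hxσ
    have := hface.2.2 _ hcx _ h2x (1/(2-c))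
      (by positivity) (by rw [div_lt_one h2c]; linarith) ?_
    · exact this.1
    · convert hx using 1
      rw [smul_smul, smul_smul, ← add_smul]
      have : 1 / (2 - c) * c + (1 - 1 / (2 - c)) * 2 = 1 := by
        field_simp; ring
      rw [this, one_smul]
  · rw [h1, one_smul]; exact hx
  · -- c > 1 : x = (1/c) • (c•x) + (1-1/c) • 0
    have hcx : c • x ∈ σ := hsmul c hc x hxσ
    have := hface.2.2 _ hcx _ h0 (1/c)
      (by positivity) (by rw [div_lt_one (by linarith)]; linarith) ?_
    · exact this.1
    · convert hx using 1
      rw [smul_smul, smul_zero, add_zero]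
      have : 1 / c * c = 1 := by field_simp
      rw [this, one_smul]

lemma face_add (hne : F.Nonempty) {x y : Fin n → ℝ} (hx : x ∈ F) (hy : y ∈ F) :
    x + y ∈ F := by
  have h := hface.2.1 hx hy (by norm_num : (0:ℝ) ≤ 1/2) (by norm_num : (0:ℝ) ≤ 1/2) (by norm_num)
  have := face_smul hface h0 hadd hsmul hne (by norm_num : (0:ℝ) ≤ 2) h
  convert this using 1
  rw [smul_add, smul_smul, smul_smul]
  norm_num

lemma face_split {x y : Fin n → ℝ} (hx : x ∈ σ) (hy : y ∈ σ) (hxy : x + y ∈ F) :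
    x ∈ F ∧ y ∈ F := by
  have hne : F.Nonempty := ⟨_, hxy⟩
  have h2x : (2:ℝ) • x ∈ σ := hsmul 2 (by norm_num) x hx
  have h2y : (2:ℝ) • y ∈ σ := hsmul 2 (by norm_num) y hy
  have h := hface.2.2 _ h2x _ h2y (1/2) (by norm_num) (by norm_num) (by
    convert hxy using 1
    rw [smul_smul, smul_smul]
    norm_num)
  constructor
  · have := face_smul hface h0 hadd hsmul hne (by norm_num : (0:ℝ) ≤ 1/2) h.1
    rwa [smul_smul, show (1/2 : ℝ) * 2 = 1 by norm_num, one_smul] at this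
  · have := face_smul hface h0 hadd hsmul hne (by norm_num : (0:ℝ) ≤ 1/2) h.2
    rwa [smul_smul, show (1/2 : ℝ) * 2 = 1 by norm_num, one_smul] at this

lemma face_sum_split {α : Type*} (s : Finset α) (c : α → ℝ) (g : α → Fin n → ℝ)
    (hc : ∀ a ∈ s, 0 ≤ c a) (hg : ∀ a ∈ s, g a ∈ σ)
    (hsum : (∑ a ∈ s, c a • g a) ∈ F) :
    ∀ a ∈ s, c a • g a ∈ F := by
  classical
  induction s using Finset.induction with
  | empty => intro a ha; exact absurd ha (Finset.notMem_empty a)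
  | @insert a s ha ih =>
    rw [Finset.sum_insert ha] at hsum
    have h1 : c a • g a ∈ σ :=
      hsmul _ (hc a (mem_insert_self a s)) _ (hg a (mem_insert_self a s))
    have h2 : (∑ b ∈ s, c b • g b) ∈ σ :=
      cone_sum h0 hadd hsmul s c g (fun b hb => hc b (mem_insert_of_mem hb))
        (fun b hb => hg b (mem_insert_of_mem hb))
    obtain ⟨hA, hB⟩ := face_split hface h0 hadd hsmul h1 h2 hsum
    intro b hb
    rcases Finset.mem_insert.mp hb with rfl | hb
    · exact hA
    · exact ih (fun b hb => hc b (mem_insert_of_mem hb))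
        (fun b hb => hg b (mem_insert_of_mem hb)) hB b hb

end Face
lemma dot_continuous (g : Fin n → ℝ) : Continuous (fun y : Fin n → ℝ => ∑ j, y j * g j) := by
  apply continuous_finset_sum
  intro j _
  exact (continuous_apply j).mul continuous_const

/-- Rational solutions of a rational linear system are dense in the real solutions. -/
lemma dense_rat (s₀ : Finset (Fin n → ℤ)) :
    {y : Fin n → ℝ | ∀ g ∈ s₀, (∑ j, y j * (g j : ℝ)) = 0} ⊆
      closure {y : Fin n → ℝ | (∃ q : Fin n → ℚ, ∀ j, y j = (q j : ℝ)) ∧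
        ∀ g ∈ s₀, (∑ j, y j * (g j : ℝ)) = 0} := by
  classical
  induction s₀ using Finset.induction with
  | empty =>
    intro y _
    rw [Metric.mem_closure_iff]
    intro ε hε
    have : ∀ j, ∃ q : ℚ, |y j - (q:ℝ)| < ε / 2 := fun j => exists_rat_near (y j) (by linarith)
    choose q hq using this
    refine ⟨fun j => (q j : ℝ), ⟨⟨q, fun j => rfl⟩, by simp⟩, ?_⟩
    rw [dist_pi_lt_iff hε]
    intro j
    rw [Real.dist_eq]
    calc |y j - (q j : ℝ)| < ε / 2 := hq j
    _ < ε := by linarith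
  | @insert g s₀' hg ih =>
    intro y hy
    have hy' : y ∈ {y : Fin n → ℝ | ∀ g' ∈ s₀', (∑ j, y j * (g' j : ℝ)) = 0} :=
      fun g' hg' => hy g' (mem_insert_of_mem hg')
    have hyg : (∑ j, y j * (g j : ℝ)) = 0 := hy g (mem_insert_self g s₀')
    set S := {y : Fin n → ℝ | (∃ q : Fin n → ℚ, ∀ j, y j = (q j : ℝ)) ∧
        ∀ g' ∈ s₀', (∑ j, y j * (g' j : ℝ)) = 0} with hS
    set T := {y : Fin n → ℝ | (∃ q : Fin n → ℚ, ∀ j, y j = (q j : ℝ)) ∧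
        ∀ g' ∈ insert g s₀', (∑ j, y j * (g' j : ℝ)) = 0} with hT
    by_cases hcase : ∀ z ∈ S, (∑ j, z j * (g j : ℝ)) = 0
    · -- every rational solution of the smaller system already satisfies the new equation
      have hsub : S ⊆ T := by
        intro z hz
        refine ⟨hz.1, ?_⟩
        intro g' hg'
        rcases Finset.mem_insert.mp hg' with rfl | hg'
        · exact hcase z hz
        · exact hz.2 g' hg'
      exact closure_mono hsub (ih hy')
    · push_neg at hcase
      obtain ⟨z₀, hz₀S, hz₀g⟩ := hcase
      -- the correction map
      set Φ : (Fin n → ℝ) → (Fin n → ℝ) :=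
        fun z => z - ((∑ j, z j * (g j : ℝ)) / (∑ j, z₀ j * (g j : ℝ))) • z₀ with hΦ
      have hΦcont : Continuous Φ := by
        apply Continuous.sub continuous_id
        exact Continuous.smul ((dot_continuous (zc g)).div_const _) continuous_const
      have hΦy : Φ y = y := by
        simp [hΦ, hyg]
      have hΦS : Φ '' S ⊆ T := by
        rintro - ⟨z, hz, rfl⟩
        obtain ⟨⟨q, hq⟩, hzsol⟩ := hz
        obtain ⟨⟨q₀, hq₀⟩, hz₀sol⟩ := hz₀S
        constructor
        · -- rationality
          have h1 : (∑ j, z j * (g j : ℝ)) = ((∑ j, q j * (g j : ℚ) : ℚ) : ℝ) := by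
            push_cast
            exact Finset.sum_congr rfl fun j _ => by rw [hq j]
          have h2 : (∑ j, z₀ j * (g j : ℝ)) = ((∑ j, q₀ j * (g j : ℚ) : ℚ) : ℝ) := by
            push_cast
            exact Finset.sum_congr rfl fun j _ => by rw [hq₀ j]
          refine ⟨fun j => q j - ((∑ j, q j * (g j : ℚ)) / (∑ j, q₀ j * (g j : ℚ))) * q₀ j, ?_⟩
          intro j
          simp only [hΦ, Pi.sub_apply, Pi.smul_apply, smul_eq_mul]
          rw [h1, h2, hq j, hq₀ j]
          push_cast
          ring
        · -- solves the system
          intro g' hg'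
          have hlin : (∑ j, (Φ z) j * (g' j : ℝ)) =
              (∑ j, z j * (g' j : ℝ)) -
                ((∑ j, z j * (g j : ℝ)) / (∑ j, z₀ j * (g j : ℝ))) * (∑ j, z₀ j * (g' j : ℝ)) := by
            simp only [hΦ, Pi.sub_apply, Pi.smul_apply, smul_eq_mul, sub_mul,
              Finset.sum_sub_distrib, Finset.mul_sum]
            congr 1
            exact Finset.sum_congr rfl fun j _ => by ring
          rcases Finset.mem_insert.mp hg' with rfl | hg'
          · rw [hlin, div_mul_cancel₀ _ hz₀g, sub_self]
          · rw [hlin, hzsol g' hg', hz₀sol g' hg', zero_sub, mul_zero, neg_zero]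
      have hmem : Φ y ∈ Φ '' closure S := mem_image_of_mem Φ (ih hy')
      have : Φ y ∈ closure T :=
        closure_mono hΦS (image_closure_subset_closure_image hΦcont hmem)
      rwa [hΦy] at this

-- ACTUAL CHUNK 4:
/-- For a proper face `F` of a rational cone `σp` there is an integer functional,
nonnegative on `σp`, vanishing on `F`, and positive somewhere on `σp`. -/
lemma exists_int_dual {σp F : Set (Fin n → ℝ)}
    (hpoly : IsRatCone σp) (hface : IsFaceOf F σp) (hFne : F.Nonempty) (hne : F ≠ σp) :
    ∃ m : Fin n → ℤ,
      (∀ w ∈ σp, 0 ≤ ∑ j, (m j : ℝ) * w j) ∧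
      (∀ w ∈ F, (∑ j, (m j : ℝ) * w j) = 0) ∧
      (∃ w ∈ σp, 0 < ∑ j, (m j : ℝ) * w j) := by
  classical
  obtain ⟨s, hσ⟩ := hpoly
  obtain ⟨h0, hadd, hsmul⟩ := ratCone_ops ⟨s, hσ⟩
  have hgen : ∀ g ∈ s, zc g ∈ σp := by
    intro g hgs
    rw [hσ]
    refine ⟨fun g' => if g' = g then 1 else 0, fun g' => by positivity, ?_⟩
    rw [Finset.sum_eq_single g]
    · ext i; simp [zc]
    · intro b _ hbg; simp [hbg]
    · intro h; exact absurd hgs h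
  have hmemrep : ∀ x ∈ σp, ∃ c : (Fin n → ℤ) → ℝ, (∀ g, 0 ≤ c g) ∧
      x = ∑ g ∈ s, c g • zc g := by
    intro x hx
    rw [hσ] at hx
    exact hx
  set sF : Finset (Fin n → ℤ) := s.filter (fun g => zc g ∈ F) with hsFdef
  set V : Submodule ℝ (Fin n → ℝ) := Submodule.span ℝ (zc '' (sF : Set (Fin n → ℤ))) with hVdef
  have h0F : (0 : Fin n → ℝ) ∈ F := face_zero hface h0 hadd hsmul hFne
  have haddF : ∀ x ∈ F, ∀ y ∈ F, x + y ∈ F := fun x hx y hy =>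
    face_add hface h0 hadd hsmul hFne hx hy
  have hsmulF : ∀ c : ℝ, 0 ≤ c → ∀ x ∈ F, c • x ∈ F := fun c hc x hx =>
    face_smul hface h0 hadd hsmul hFne hc hx
  have hscale_mem : ∀ (c : ℝ), 0 < c → ∀ x : Fin n → ℝ, c • x ∈ F → x ∈ F := by
    intro c hc x hx
    have := hsmulF c⁻¹ (le_of_lt (inv_pos.mpr hc)) _ hx
    rwa [smul_smul, inv_mul_cancel₀ (ne_of_gt hc), one_smul] at this
  -- F ⊆ V
  have hFV : F ⊆ (V : Set (Fin n → ℝ)) := by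
    intro x hxF
    obtain ⟨c, hc, hx⟩ := hmemrep x (hface.1 hxF)
    have hterms := face_sum_split hface h0 hadd hsmul s c zc (fun a _ => hc a)
      (fun a ha => hgen a ha) (hx ▸ hxF)
    rw [hx]
    apply Submodule.sum_mem
    intro g hgs
    rcases eq_or_lt_of_le (hc g) with hzero | hpos
    · rw [← hzero, zero_smul]; exact Submodule.zero_mem V
    · have hzcg : zc g ∈ F := hscale_mem _ hpos _ (hterms g hgs)
      have hgsF : g ∈ sF := Finset.mem_filter.mpr ⟨hgs, hzcg⟩
      exact Submodule.smul_mem V _ (Submodule.subset_span ⟨g, hgsF, rfl⟩)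
  -- σp ∩ V ⊆ F
  have hσV : ∀ x ∈ σp, x ∈ (V : Set (Fin n → ℝ)) → x ∈ F := by
    intro x hxσ hxV
    have hxV' : x ∈ Submodule.span ℝ ((sF.image zc : Finset (Fin n → ℝ)) : Set (Fin n → ℝ)) := by
      rwa [Finset.coe_image]
    rw [Submodule.mem_span_finset] at hxV'
    obtain ⟨f, -, hf⟩ := hxV'
    set T := sF.image zc with hT
    have hTF : ∀ u ∈ T, u ∈ F := by
      intro u hu
      obtain ⟨g, hgsF, rfl⟩ := Finset.mem_image.mp hu
      exact (Finset.mem_filter.mp hgsF).2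
    have hAF : (∑ u ∈ T, (max (f u) 0) • u) ∈ F :=
      cone_sum h0F haddF hsmulF T _ id (fun u _ => le_max_right _ _) hTF
    have hBF : (∑ u ∈ T, (max (-f u) 0) • u) ∈ F :=
      cone_sum h0F haddF hsmulF T _ id (fun u _ => le_max_right _ _) hTF
    have hABx : x + (∑ u ∈ T, (max (-f u) 0) • u) = ∑ u ∈ T, (max (f u) 0) • u := by
      rw [← hf, ← Finset.sum_add_distrib]
      apply Finset.sum_congr rfl
      intro u _
      rw [← add_smul]
      congr 1
      rcases le_total (f u) 0 with h | h
      · rw [max_eq_left (neg_nonneg.mpr h), max_eq_right h]; ring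
      · rw [max_eq_right (neg_nonpos.mpr h), max_eq_left h]; ring
    exact (face_split hface h0 hadd hsmul hxσ (hface.1 hBF) (hABx ▸ hAF)).1
  -- a generator outside F
  have hg0 : ∃ g₀ ∈ s, zc g₀ ∉ F := by
    by_contra hall
    push_neg at hall
    apply hne
    apply Set.Subset.antisymm hface.1
    intro x hxσ
    obtain ⟨c, hc, hx⟩ := hmemrep x hxσ
    rw [hx]
    exact cone_sum h0F haddF hsmulF s c zc (fun a _ => hc a) hall
  obtain ⟨g₀, hg₀s, hg₀F⟩ := hg0
  have hg₀sF : g₀ ∉ sF := fun h => hg₀F (Finset.mem_filter.mp h).2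
  have hg₀sd : g₀ ∈ s \ sF := Finset.mem_sdiff.mpr ⟨hg₀s, hg₀sF⟩
  -- separate 0 from convexHull (zc '' (s \ sF)) + V
  set K : Set (Fin n → ℝ) :=
    convexHull ℝ (((s \ sF).image zc : Finset (Fin n → ℝ)) : Set (Fin n → ℝ)) with hK
  set D : Set (Fin n → ℝ) := K + (V : Set (Fin n → ℝ)) with hD
  have hDconv : Convex ℝ D := (convex_convexHull ℝ _).add V.convex
  have hDclosed : IsClosed D :=
    IsClosed.add_left_of_isCompact (V.closed_of_finiteDimensional)
      ((Finset.finite_toSet _).isCompact_convexHull ℝ)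
  have h0D : (0 : Fin n → ℝ) ∉ D := by
    intro h0mem
    rw [Set.mem_add] at h0mem
    obtain ⟨a, haK, vv, hvvV, hsum⟩ := h0mem
    rw [hK, Finset.convexHull_eq] at haK
    obtain ⟨w, hw0, hw1, hwa⟩ := haK
    rw [Finset.centerMass_eq_of_sum_1 _ id hw1] at hwa
    set T' := (s \ sF).image zc with hT'
    have hT'σ : ∀ u ∈ T', u ∈ σp := by
      intro u hu
      obtain ⟨g, hgd, rfl⟩ := Finset.mem_image.mp hu
      exact hgen g (Finset.mem_sdiff.mp hgd).1
    have haσ : a ∈ σp := by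
      rw [← hwa]
      exact cone_sum h0 hadd hsmul T' w id hw0 hT'σ
    have haV : a ∈ (V : Set (Fin n → ℝ)) := by
      rw [eq_neg_of_add_eq_zero_left hsum]
      exact V.neg_mem hvvV
    have haF : a ∈ F := hσV a haσ haV
    have hterms := face_sum_split hface h0 hadd hsmul T' w id hw0 hT'σ (by rw [hwa]; exact haF)
    have hex : ∃ u ∈ T', w u ≠ 0 := by
      by_contra hallz
      push_neg at hallz
      rw [Finset.sum_eq_zero hallz] at hw1
      norm_num at hw1
    obtain ⟨u₀, hu₀T, hu₀w⟩ := hex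
    have hu₀pos : 0 < w u₀ := lt_of_le_of_ne (hw0 u₀ hu₀T) (Ne.symm hu₀w)
    have hu₀F : u₀ ∈ F := hscale_mem _ hu₀pos _ (hterms u₀ hu₀T)
    obtain ⟨g, hgd, rfl⟩ := Finset.mem_image.mp hu₀T
    exact (Finset.mem_sdiff.mp hgd).2 (Finset.mem_filter.mpr ⟨(Finset.mem_sdiff.mp hgd).1, hu₀F⟩)
  obtain ⟨f, u, hfu0, hfD⟩ := geometric_hahn_banach_point_closed hDconv hDclosed h0D
  have hu : 0 < u := by simpa using hfu0
  have hKD : ∀ y ∈ K, y ∈ D := by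
    intro y hy
    have := Set.add_mem_add hy (V.zero_mem)
    rwa [add_zero] at this
  have hg₀K : zc g₀ ∈ K :=
    subset_convexHull ℝ _ (Finset.mem_coe.mpr (Finset.mem_image_of_mem zc hg₀sd))
  have hfV : ∀ vv ∈ V, f vv = 0 := by
    intro vv hvv
    by_contra hne0
    have hall : ∀ t : ℝ, u < f (zc g₀) + t * f vv := by
      intro t
      have hmem : zc g₀ + t • vv ∈ D := Set.add_mem_add hg₀K (V.smul_mem t hvv)
      have := hfD _ hmem
      simpa [map_add, map_smul, smul_eq_mul] using this
    have := hall ((u - f (zc g₀) - 1) / f vv)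
    rw [div_mul_cancel₀ _ hne0] at this
    linarith
  have hfpos : ∀ g ∈ s \ sF, u < f (zc g) := by
    intro g hgd
    exact hfD _ (hKD _ (subset_convexHull ℝ _ (Finset.mem_coe.mpr (Finset.mem_image_of_mem zc hgd))))
  -- coordinates
  set m₀ : Fin n → ℝ := fun j => f (fun i => if j = i then 1 else 0) with hm₀
  have hfeq : ∀ y : Fin n → ℝ, f y = ∑ j, y j * m₀ j := by
    intro y
    conv_lhs => rw [pi_eq_sum_univ y, map_sum]
    apply Finset.sum_congr rfl
    intro j _
    rw [map_smul, smul_eq_mul, hm₀]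
  have hm₀sol : ∀ g ∈ sF, (∑ j, m₀ j * (g j : ℝ)) = 0 := by
    intro g hgsF
    have hzV : zc g ∈ V := Submodule.subset_span ⟨g, hgsF, rfl⟩
    have := hfV _ hzV
    rw [hfeq] at this
    rw [← this]
    exact Finset.sum_congr rfl fun j _ => mul_comm _ _
  set U : Set (Fin n → ℝ) := {y | ∀ g ∈ s \ sF, 0 < ∑ j, y j * (g j : ℝ)} with hU
  have hUopen : IsOpen U := by
    have : U = ⋂ g ∈ (s \ sF), {y : Fin n → ℝ | 0 < ∑ j, y j * (g j : ℝ)} := by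
      ext y; simp [hU]
    rw [this]
    exact isOpen_biInter_finset fun g _ =>
      isOpen_lt continuous_const (dot_continuous (zc g))
  have hm₀U : m₀ ∈ U := by
    intro g hgd
    have h1 := hfpos g hgd
    rw [hfeq] at h1
    have : (∑ j, m₀ j * (g j : ℝ)) = ∑ j, zc g j * m₀ j :=
      Finset.sum_congr rfl fun j _ => mul_comm _ _
    rw [this]
    linarith
  have hclos := dense_rat sF hm₀sol
  rw [mem_closure_iff] at hclos
  obtain ⟨z, hzU, ⟨⟨q, hq⟩, hzsol⟩⟩ := hclos U hUopen hm₀U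
  -- scale to integers
  set N : ℕ := ∏ j, (q j).den with hN
  have hNpos : 0 < N := Finset.prod_pos fun j _ => (q j).pos
  have hdvd : ∀ j, (q j).den ∣ N := fun j => Finset.dvd_prod_of_mem _ (Finset.mem_univ j)
  choose k hk using hdvd
  have hms : ∀ j, (((q j).num * (k j : ℤ) : ℤ) : ℝ) = (N : ℝ) * z j := by
    intro j
    rw [hq j]
    have hden : ((q j).den : ℝ) ≠ 0 := by
      exact_mod_cast (q j).den_nz
    rw [Rat.cast_def]
    have hNj : (N : ℝ) = ((q j).den : ℝ) * (k j : ℝ) := by exact_mod_cast congrArg (Nat.cast : ℕ → ℝ) (hk j)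
    rw [hNj]
    push_cast
    field_simp
  have hdot : ∀ w : Fin n → ℝ,
      (∑ j, (((q j).num * (k j : ℤ) : ℤ) : ℝ) * w j) = (N : ℝ) * ∑ j, z j * w j := by
    intro w
    rw [Finset.mul_sum]
    exact Finset.sum_congr rfl fun j _ => by rw [hms j]; ring
  have hzgen : ∀ g ∈ s, 0 ≤ ∑ j, z j * (g j : ℝ) := by
    intro g hgs
    by_cases hgsF' : g ∈ sF
    · rw [hzsol g hgsF']
    · exact le_of_lt (hzU g (Finset.mem_sdiff.mpr ⟨hgs, hgsF'⟩))
  have hdotLz : ∀ w : Fin n → ℝ, dotL z w = ∑ j, z j * w j := fun w => dotL_apply z w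
  refine ⟨fun j => (q j).num * (k j : ℤ), ?_, ?_, ?_⟩
  · intro w hw
    rw [hdot w]
    apply mul_nonneg (Nat.cast_nonneg N)
    obtain ⟨c, hc, rfl⟩ := hmemrep w hw
    rw [← hdotLz, map_sum]
    apply Finset.sum_nonneg
    intro g hgs
    rw [map_smul, smul_eq_mul]
    apply mul_nonneg (hc g)
    rw [hdotLz]
    exact hzgen g hgs
  · intro w hwF
    rw [hdot w, ← hdotLz]
    have hwV : w ∈ V := hFV hwF
    have : dotL z w = 0 := by
      refine Submodule.span_induction ?_ ?_ ?_ ?_ hwV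
      · rintro x ⟨g, hgsF, rfl⟩
        rw [hdotLz]
        exact hzsol g hgsF
      · exact map_zero _
      · intro a b _ _ ha hb
        rw [map_add, ha, hb, add_zero]
      · intro r a _ ha
        rw [map_smul, ha, smul_zero]
    rw [this, mul_zero]
  · refine ⟨zc g₀, hgen g₀ hg₀s, ?_⟩
    rw [hdot]
    exact mul_pos (by exact_mod_cast hNpos) (hzU g₀ hg₀sd)

end PhiChainAux

open PhiChainAux in
/-- for a strictly ascending chain `σ₀ < ⋯ < σ_p` (`p ≥ 1`) of cones of a
rational fan with interior lattice points `v_{σ_i}`, the map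
`φ(t)(m) = (∏_{i=1}^p t_i^⟨m,v_{σ_i}⟩) · x_{σ₀}(m)` (real powers, with `0⁰ = 1`):
(a) has all exponents `⟨m, v_{σ_i}⟩ ≥ 0` for `m ∈ σ_p^∨` (well-definedness);
(b) is continuous in `t ∈ [0,1]^p` for each `m ∈ σ_p^∨ ∩ M`;
(c) equals the distinguished point `x_{σ_p}` whenever `t_p = 0`;
(d) takes different values on `σ_p^∨ ∩ M` whenever `t_p ≠ t'_p`. -/
theorem phi_chain_properties (n p : ℕ) (hp : 1 ≤ p)
    (σ : Fin (p + 1) → Set (Fin n → ℝ))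
    (hpoly : ∀ i, IsRatCone (σ i))
    (hchain : ∀ i : Fin p, IsFaceOf (σ i.castSucc) (σ i.succ) ∧ σ i.castSucc ≠ σ i.succ)
    (v : Fin (p + 1) → Fin n → ℤ)
    (hv : ∀ i, (fun j => (v i j : ℝ)) ∈ intrinsicInterior ℝ (σ i))
    (x : (Fin n → ℤ) → ℝ)
    (hx : ∀ m : Fin n → ℤ,
      ((∀ w ∈ σ 0, ∑ j, (m j : ℝ) * w j = 0) → x m = 1) ∧
      ((¬ ∀ w ∈ σ 0, ∑ j, (m j : ℝ) * w j = 0) → x m = 0))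
    (φ : (Fin p → ℝ) → (Fin n → ℤ) → ℝ)
    (hφ : ∀ t m, φ t m =
      (∏ i : Fin p, (t i) ^ (∑ j, (m j : ℝ) * (v i.succ j))) * x m) :
    (∀ m : Fin n → ℤ, (∀ w ∈ σ (Fin.last p), 0 ≤ ∑ j, (m j : ℝ) * w j) →
      ∀ i : Fin p, 0 ≤ ∑ j, (m j : ℝ) * (v i.succ j)) ∧
    (∀ m : Fin n → ℤ, (∀ w ∈ σ (Fin.last p), 0 ≤ ∑ j, (m j : ℝ) * w j) →
      ContinuousOn (fun t => φ t m) {t : Fin p → ℝ | ∀ i, t i ∈ Set.Icc (0 : ℝ) 1}) ∧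
    (∀ t : Fin p → ℝ, (∀ i, t i ∈ Set.Icc (0 : ℝ) 1) →
      t ⟨p - 1, by omega⟩ = 0 →
      ∀ m : Fin n → ℤ, (∀ w ∈ σ (Fin.last p), 0 ≤ ∑ j, (m j : ℝ) * w j) →
        (((∀ w ∈ σ (Fin.last p), ∑ j, (m j : ℝ) * w j = 0) → φ t m = 1) ∧
         ((¬ ∀ w ∈ σ (Fin.last p), ∑ j, (m j : ℝ) * w j = 0) → φ t m = 0))) ∧
    (∀ t t' : Fin p → ℝ, (∀ i, t i ∈ Set.Icc (0 : ℝ) 1) →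
      (∀ i, t' i ∈ Set.Icc (0 : ℝ) 1) →
      t ⟨p - 1, by omega⟩ ≠ t' ⟨p - 1, by omega⟩ →
      ∃ m : Fin n → ℤ, (∀ w ∈ σ (Fin.last p), 0 ≤ ∑ j, (m j : ℝ) * w j) ∧
        φ t m ≠ φ t' m) := by
  classical
  -- basic facts about the chain
  have hvmem : ∀ i, (fun j => (v i j : ℝ)) ∈ σ i := fun i => intrinsicInterior_subset (hv i)
  have hstep : ∀ (a : ℕ) (ha : a < p), σ ⟨a, by omega⟩ ⊆ σ ⟨a + 1, by omega⟩ := by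
    intro a ha
    exact (hchain ⟨a, ha⟩).1.1
  have hmono : ∀ (b : ℕ) (hb : b ≤ p) (a : ℕ) (hab : a ≤ b),
      σ ⟨a, by omega⟩ ⊆ σ ⟨b, by omega⟩ := by
    intro b
    induction b with
    | zero =>
      intro hb a hab
      have : a = 0 := Nat.le_zero.mp hab
      subst this
      exact subset_rfl
    | succ c ih =>
      intro hb a hab
      rcases Nat.lt_succ_iff_lt_or_eq.mp (Nat.lt_succ_of_le hab) with h | h
      · exact (ih (by omega) a (by omega)).trans (hstep c (by omega))
      · subst h
        exact subset_rfl
  have hsub : ∀ i : Fin (p + 1), σ i ⊆ σ (Fin.last p) := by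
    intro i
    have h := hmono p le_rfl i.1 (Nat.lt_succ_iff.mp i.isLt)
    have e1 : (⟨i.1, by omega⟩ : Fin (p+1)) = i := rfl
    have e2 : (⟨p, by omega⟩ : Fin (p+1)) = Fin.last p := rfl
    rw [e1, e2] at h
    exact h
  -- (a)
  have parta : ∀ m : Fin n → ℤ, (∀ w ∈ σ (Fin.last p), 0 ≤ ∑ j, (m j : ℝ) * w j) →
      ∀ i : Fin p, 0 ≤ ∑ j, (m j : ℝ) * (v i.succ j) := by
    intro m hm i
    exact hm _ (hsub i.succ (hvmem i.succ))
  -- positivity of the last exponent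
  have keypos : ∀ m : Fin n → ℤ, (∀ w ∈ σ (Fin.last p), 0 ≤ ∑ j, (m j : ℝ) * w j) →
      (¬ ∀ w ∈ σ (Fin.last p), (∑ j, (m j : ℝ) * w j) = 0) →
      0 < ∑ j, (m j : ℝ) * (v (Fin.last p) j) := by
    intro m hm hnp
    rcases eq_or_lt_of_le (hm _ (hsub (Fin.last p) (hvmem (Fin.last p)))) with h0 | h
    · exfalso
      apply hnp
      exact PhiChainAux.pos_of_relint (PhiChainAux.dotL (fun j => (m j : ℝ))) hm
        (hv (Fin.last p)) h0.symm
    · exact h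
  set iF : Fin p := ⟨p - 1, by omega⟩ with hiF
  have hiFsucc : iF.succ = Fin.last p := by
    ext
    simp [hiF, Fin.last]
    omega
  refine ⟨parta, ?_, ?_, ?_⟩
  -- (b)
  · intro m hm
    have hrw : (fun t : Fin p → ℝ => φ t m) =
        fun t => (∏ i : Fin p, (t i) ^ (∑ j, (m j : ℝ) * (v i.succ j))) * x m :=
      funext fun t => hφ t m
    rw [hrw]
    apply Continuous.continuousOn
    apply Continuous.mul ?_ continuous_const
    apply continuous_finset_prod
    intro i _
    exact (Real.continuous_rpow_const (parta m hm i)).comp (continuous_apply i)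
  -- (c)
  · intro t ht htp m hm
    constructor
    · intro hperp
      rw [hφ]
      have hx1 : x m = 1 := (hx m).1 (fun w hw => hperp w (hsub 0 hw))
      rw [hx1, mul_one]
      apply Finset.prod_eq_one
      intro i _
      rw [hperp _ (hsub i.succ (hvmem i.succ)), Real.rpow_zero]
    · intro hnp
      rw [hφ]
      by_cases hx0 : ∀ w ∈ σ 0, (∑ j, (m j : ℝ) * w j) = 0
      · have hepos := keypos m hm hnp
        have hzero : (∏ i : Fin p, (t i) ^ (∑ j, (m j : ℝ) * (v i.succ j))) = 0 := by
          apply Finset.prod_eq_zero (Finset.mem_univ iF)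
          rw [hiFsucc]
          rw [show t iF = 0 from htp]
          exact Real.zero_rpow (ne_of_gt hepos)
        rw [hzero, zero_mul]
      · rw [(hx m).2 hx0, mul_zero]
  -- (d)
  · intro t t' ht ht' hne
    set jF : Fin (p + 1) := ⟨p - 1, by omega⟩ with hjF
    have hcs : iF.castSucc = jF := rfl
    have hfaceP : IsFaceOf (σ jF) (σ (Fin.last p)) := by
      have := (hchain iF).1
      rwa [hcs, hiFsucc] at this
    have hneP : σ jF ≠ σ (Fin.last p) := by
      have := (hchain iF).2
      rwa [hcs, hiFsucc] at this
    obtain ⟨m, hm1, hm2, hm3⟩ := PhiChainAux.exists_int_dual (hpoly (Fin.last p)) hfaceP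
      ⟨_, hvmem jF⟩ hneP
    refine ⟨m, hm1, ?_⟩
    have hx1 : x m = 1 := by
      apply (hx m).1
      intro w hw
      apply hm2
      exact hmono (p - 1) (by omega) 0 (Nat.zero_le _) hw
    have hzero : ∀ i : Fin p, i ≠ iF → (∑ j, (m j : ℝ) * (v i.succ j)) = 0 := by
      intro i hine
      apply hm2
      have hile : (i : ℕ) + 1 ≤ p - 1 := by
        have h1 := i.isLt
        have h2 : (i : ℕ) ≠ p - 1 := fun h => hine (Fin.ext h)
        omega
      exact hmono (p - 1) (by omega) ((i : ℕ) + 1) hile (hvmem i.succ)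
    have hepos : 0 < ∑ j, (m j : ℝ) * (v (Fin.last p) j) := by
      apply keypos m hm1
      intro hall
      obtain ⟨w, hwσ, hwpos⟩ := hm3
      rw [hall w hwσ] at hwpos
      exact lt_irrefl 0 hwpos
    have hφeq : ∀ s : Fin p → ℝ, φ s m =
        (s iF) ^ (∑ j, (m j : ℝ) * (v (Fin.last p) j)) := by
      intro s
      rw [hφ, hx1, mul_one]
      rw [Finset.prod_eq_single iF]
      · rw [hiFsucc]
      · intro b _ hb
        rw [hzero b hb, Real.rpow_zero]
      · intro h
        exact absurd (Finset.mem_univ iF) h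
    rw [hφeq t, hφeq t']
    have htiF : t iF ∈ Set.Icc (0:ℝ) 1 := ht iF
    have htiF' : t' iF ∈ Set.Icc (0:ℝ) 1 := ht' iF
    have hne' : t iF ≠ t' iF := hne
    rcases hne'.lt_or_gt with h | h
    · exact ne_of_lt (Real.rpow_lt_rpow htiF.1 h hepos)
    · exact (ne_of_lt (Real.rpow_lt_rpow htiF'.1 h hepos)).symm
end
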